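/- Let A and B be matrices over a field of sizes n×m and p×q respectively, completing patterns A_x and B_x (patterns are functions into Option F_q; a completion agrees with all determined entries). Suppose every determined entry of A_x is 0 or 1. Define the lexicographic block pattern L_x on (np)×(mq) matrices whose (i,j)-th block (i ∈ Fin n, j ∈ Fin m) is: B_x if A_x(i,j) = some 1; the all-(some 0) pattern if A_x(i,j) = some 0; and the all-unknown pattern if A_x(i,j) = none. Then the Kronecker product A ⊗ B completes L_x, and consequently minrank(L_x) ≤ rank(A) · rank(B). -/

import Mathlib

/-- A pattern: a partially specified matrix, `none` denoting an unknown entry. -/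
def Pattern (α β F : Type*) := α → β → Option F

/-- A matrix `M` completes a pattern `A` if it agrees with all determined entries. -/
def Completes {α β F : Type*} (M : Matrix α β F) (A : Pattern α β F) : Prop :=
  ∀ i j c, A i j = some c → M i j = c

/-- The minrank of a pattern: the minimum rank over all its completions. -/
noncomputable def minrank {α β F : Type*} [Fintype α] [Fintype β] [Field F]
    (A : Pattern α β F) : ℕ :=
  sInf {r | ∃ M : Matrix α β F, Completes M A ∧ M.rank = r}

open Matrix in
lemma rank_factorization {F : Type*} [Field F] {n m : ℕ} (M : Matrix (Fin n) (Fin m) F) :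
    ∃ (C : Matrix (Fin n) (Fin M.rank) F) (D : Matrix (Fin M.rank) (Fin m) F), M = C * D := by
  set S : Submodule F (Fin n → F) := Submodule.span F (Set.range Mᵀ) with hS
  have hr : M.rank = Module.finrank F S := M.rank_eq_finrank_span_cols
  have : FiniteDimensional F S := FiniteDimensional.span_of_finite F (Set.finite_range _)
  obtain ⟨b⟩ : Nonempty (Module.Basis (Fin M.rank) F S) := ⟨Module.finBasisOfFinrankEq F S hr.symm⟩
  have hcol : ∀ j : Fin m, Mᵀ j ∈ S := fun j => Submodule.subset_span ⟨j, rfl⟩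
  refine ⟨fun i k => (b k : Fin n → F) i, fun k j => b.repr ⟨Mᵀ j, hcol j⟩ k, ?_⟩
  ext i j
  have := b.sum_repr ⟨Mᵀ j, hcol j⟩
  have h2 := congrArg (fun v : S => (v : Fin n → F) i) this
  simp only [Submodule.coe_sum, Submodule.coe_smul, Finset.sum_apply, Pi.smul_apply,
    smul_eq_mul] at h2
  exact h2.symm.trans (Finset.sum_congr rfl fun k _ => mul_comm _ _)

lemma rank_kron_le {F : Type*} [Field F] {n m p q : ℕ}
    (A : Matrix (Fin n) (Fin m) F) (B : Matrix (Fin p) (Fin q) F) :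
    (Matrix.kroneckerMap (· * ·) A B).rank ≤ A.rank * B.rank := by
  obtain ⟨CA, DA, hA⟩ := rank_factorization A
  obtain ⟨CB, DB, hB⟩ := rank_factorization B
  calc (Matrix.kroneckerMap (· * ·) A B).rank
      = (Matrix.kroneckerMap (· * ·) CA CB * Matrix.kroneckerMap (· * ·) DA DB).rank := by
        conv_lhs => rw [hA, hB]
        rw [Matrix.mul_kronecker_mul]
    _ ≤ (Matrix.kroneckerMap (· * ·) CA CB).rank := Matrix.rank_mul_le_left _ _
    _ ≤ Fintype.card (Fin A.rank × Fin B.rank) := Matrix.rank_le_card_width _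
    _ = A.rank * B.rank := by simp

/-- The Kronecker product of completions completes the lexicographic block pattern, and
hence `minrank L ≤ rank A * rank B`. -/
theorem kronecker_completes_lex {F : Type*} [Field F] (n m p q : ℕ)
    (Ax : Pattern (Fin n) (Fin m) F) (Bx : Pattern (Fin p) (Fin q) F)
    (A : Matrix (Fin n) (Fin m) F) (B : Matrix (Fin p) (Fin q) F)
    (hA : Completes A Ax) (hB : Completes B Bx)
    (hAx01 : ∀ i j c, Ax i j = some c → c = 0 ∨ c = 1)
    (L : Pattern (Fin n × Fin p) (Fin m × Fin q) F)
    (hL1 : ∀ i j, Ax i j = some 1 → ∀ a b, L (i, a) (j, b) = Bx a b)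
    (hL0 : ∀ i j, Ax i j = some 0 → ∀ a b, L (i, a) (j, b) = some 0)
    (hLx : ∀ i j, Ax i j = none → ∀ a b, L (i, a) (j, b) = none) :
    Completes (Matrix.kroneckerMap (· * ·) A B) L ∧ minrank L ≤ A.rank * B.rank := by
  have hcomp : Completes (Matrix.kroneckerMap (· * ·) A B) L := by
    rintro ⟨i, a⟩ ⟨j, b⟩ c hc
    rw [Matrix.kroneckerMap_apply]
    cases hAx : Ax i j with
    | none => rw [hLx i j hAx a b] at hc; exact absurd hc (by simp)
    | some d =>
      rcases hAx01 i j d hAx with rfl | rfl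
      · rw [hL0 i j hAx a b] at hc
        obtain rfl := Option.some.inj hc
        rw [hA i j 0 hAx, zero_mul]
      · rw [hL1 i j hAx a b] at hc
        rw [hA i j 1 hAx, hB a b c hc, one_mul]
  refine ⟨hcomp, le_trans (Nat.sInf_le ?_) (rank_kron_le A B)⟩
  exact ⟨_, hcomp, rfl⟩
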